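/- Let K be a commutative ring with unity, A = {a_1, …, a_q} a finite alphabet, and let w, w′ be words over A of the same multi-degree (m_1, …, m_q). Suppose η, η′ ∈ ℤ satisfy η λ(w) = η′ λ(w′) in K⟨A⟩. Then for every fixed multi-degree vector (k_1, …, k_q) of nonnegative integers, η · Σ_{w = s u t, α(u) = (k_1,…,k_q)} λ(u) (−1)^{|s|} (s̃ ⧢ t) = η′ · Σ_{w′ = s′ u′ t′, α(u′) = (k_1,…,k_q)} λ(u′) (−1)^{|s′|} (s̃′ ⧢ t′), where each sum ranges over all factorizations (each occurrence counted separately) whose middle factor has the given multi-degree. -/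

import Mathlib

open scoped BigOperators
open Classical

noncomputable section

/-- The free associative algebra `K⟨A⟩` on the alphabet `A`, realized as the monoid algebra
of the free monoid on `A`. -/
abbrev NC (K A : Type*) [CommRing K] : Type _ := MonoidAlgebra K (FreeMonoid A)

variable (K A : Type*) [CommRing K]

/-- The monomial (word) `w` viewed as an element of `K⟨A⟩`. -/
def wp (w : List A) : NC K A := MonoidAlgebra.single (FreeMonoid.ofList w) 1

/-- The coefficient `(P, w)` of the word `w` in the polynomial `P`. -/
def coeffW (P : NC K A) (w : List A) : K := P.coeff (FreeMonoid.ofList w)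

/-- The canonical scalar product `(P, Q) = ∑_w (P, w)(Q, w)` on `K⟨A⟩`. -/
def sp (P Q : NC K A) : K := Finsupp.sum P.coeff fun w c => c * Q.coeff w

attribute [local instance] LieRing.ofAssociativeRing

/-- The free Lie algebra `L_K(A)`: the Lie subalgebra of `K⟨A⟩` (with the commutator
bracket) generated by the letters. -/
def freeLie : LieSubalgebra K (NC K A) :=
  LieSubalgebra.lieSpan K (NC K A) (Set.range fun a : A => wp K A [a])

/-- The adjoint `λ` of the left-normed Lie bracketing, on words:
`λ(ε) = 0`, `λ(a) = a`, `λ(aub) = λ(au)b − λ(ub)a`. -/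
def lam : List A → NC K A
  | [] => 0
  | [a] => wp K A [a]
  | a :: b :: t =>
      lam (a :: (b :: t).dropLast) * wp K A [(b :: t).getLast (by simp)] -
        lam (b :: t) * wp K A [a]
  termination_by w => w.length
  decreasing_by
    all_goals simp [List.length_dropLast]

/-- `λ` extended linearly to the whole of `K⟨A⟩`. -/
def lamLin : NC K A →ₗ[K] NC K A :=
  Finsupp.linearCombination K (fun w : FreeMonoid A => lam K A (FreeMonoid.toList w)) ∘ₗ
    (MonoidAlgebra.coeffLinearEquiv K).toLinearMap

/-- The shuffle product of two words, as an element of `K⟨A⟩`. -/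
def shuffleW : List A → List A → NC K A
  | [], v => wp K A v
  | u, [] => wp K A u
  | a :: u, b :: v =>
      wp K A [a] * shuffleW u (b :: v) + wp K A [b] * shuffleW (a :: u) v
  termination_by u v => u.length + v.length
  decreasing_by
    all_goals simp [Nat.lt_succ_iff]

/-- The shuffle product on `K⟨A⟩`, extended bilinearly. -/
def sh (P Q : NC K A) : NC K A :=
  Finsupp.sum P.coeff fun u cu =>
    Finsupp.sum Q.coeff fun v cv =>
      (cu * cv) • shuffleW K A (FreeMonoid.toList u) (FreeMonoid.toList v)

/-- The right residual `P ▷ q` of `P` by a word `q`: `(P ▷ q, w) = (P, qw)`. -/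
def rresW (P : NC K A) (q : List A) : NC K A :=
  Finsupp.sum P.coeff fun u c =>
    if q <+: FreeMonoid.toList u then c • wp K A ((FreeMonoid.toList u).drop q.length) else 0

/-- The right residual `P ▷ Q`: `(P ▷ Q, w) = (P, Qw)`. -/
def rres (P Q : NC K A) : NC K A :=
  Finsupp.sum Q.coeff fun v c => c • rresW K A P (FreeMonoid.toList v)

/-- Auxiliary left residual by a word `q`: `(q ◁ P, w) = (P, wq)`. -/
def lresW (P : NC K A) (q : List A) : NC K A :=
  Finsupp.sum P.coeff fun u c =>
    if q <:+ FreeMonoid.toList u then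
      c • wp K A ((FreeMonoid.toList u).take ((FreeMonoid.toList u).length - q.length))
    else 0

/-- The left residual `Q ◁ P`: `(Q ◁ P, w) = (P, wQ)`. -/
def lres (Q P : NC K A) : NC K A :=
  Finsupp.sum Q.coeff fun v c => c • lresW K A P (FreeMonoid.toList v)

/-- The number of trailing occurrences of the letter `a` in the word `v`. -/
def trailCount (a : A) (v : FreeMonoid A) : ℕ :=
  ((FreeMonoid.toList v).reverse.takeWhile fun x => decide (x = a)).length

/-- `d(P)`: the least number of trailing `a`'s among the words in the support of `P`. -/
def dP (a : A) (P : NC K A) : ℕ :=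
  sInf {n : ℕ | ∃ v ∈ Finsupp.support P.coeff, trailCount A a v = n}

/-- `e(P)`: the largest number of trailing `a`'s among the words in the support of `P`. -/
def eP (a : A) (P : NC K A) : ℕ :=
  Finset.sup (Finsupp.support P.coeff) (trailCount A a)

/-- The polynomial `P_i` in the decomposition `P = ∑ P_i b a^i`: it collects (and strips
the suffix `b a^i` from) the monomials of `P` with exactly `i` trailing `a`'s. -/
def partBA (a b : A) (i : ℕ) (P : NC K A) : NC K A :=
  Finsupp.sum P.coeff fun v c =>
    if (FreeMonoid.toList v).reverse.take (i + 1) = List.replicate i a ++ [b] then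
      c • wp K A ((FreeMonoid.toList v).take ((FreeMonoid.toList v).length - (i + 1)))
    else 0

/-- A word is Lyndon if it is nonempty and strictly smaller, in the lexicographic order,
than each of its proper nonempty right factors. -/
def IsLyndon {A : Type*} [LinearOrder A] (w : List A) : Prop :=
  w ≠ [] ∧ ∀ s t : List A, w = t ++ s → t ≠ [] → s ≠ [] → List.Lex (· < ·) w s

/-- `γ(w)`: the nonnegative generator of the ideal `{(P, w) : P ∈ L_ℤ(A)}` of `ℤ`. -/
def gammaW (A : Type*) (w : List A) : ℤ :=
  haveI : (Ideal.span {c : ℤ | ∃ P ∈ freeLie ℤ A, coeffW ℤ A P w = c}).IsPrincipal :=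
    IsPrincipalIdealRing.principal _
  (Submodule.IsPrincipal.generator
    (Ideal.span {c : ℤ | ∃ P ∈ freeLie ℤ A, coeffW ℤ A P w = c})).natAbs

end

open Pointwise
section T
variable (K A : Type*) [CommRing K]

lemma wp_nil : wp K A [] = 1 := rfl

lemma wp_append (u v : List A) : wp K A (u ++ v) = wp K A u * wp K A v := by
  simp [wp, MonoidAlgebra.single_mul_single]

lemma lam_nil : lam K A [] = 0 := by rw [lam]

lemma lam_single (a : A) : lam K A [a] = wp K A [a] := by rw [lam]

lemma lam_cons_cons (a b : A) (t : List A) :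
    lam K A (a :: b :: t) =
      lam K A (a :: (b :: t).dropLast) * wp K A [(b :: t).getLast (by simp)] -
        lam K A (b :: t) * wp K A [a] := by
  rw [lam]

lemma shuffleW_nil_left (v : List A) : shuffleW K A [] v = wp K A v := by rw [shuffleW]

lemma shuffleW_nil_right (u : List A) : shuffleW K A u [] = wp K A u := by
  cases u
  · rw [shuffleW]
  · rw [shuffleW] <;> simp

lemma shuffleW_cons_cons (a b : A) (u v : List A) :
    shuffleW K A (a :: u) (b :: v) =
      wp K A [a] * shuffleW K A u (b :: v) + wp K A [b] * shuffleW K A (a :: u) v := by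
  rw [shuffleW]

example (f g : NC K A) : (f * g).coeff.support ⊆ f.coeff.support * g.coeff.support :=
  MonoidAlgebra.support_coeff_mul_subset f g

lemma filter_smul' (p : FreeMonoid A → Prop) [DecidablePred p] (f : NC K A) (η : ℤ) :
    Finsupp.filter p (η • f).coeff = η • Finsupp.filter p f.coeff := by
  rw [MonoidAlgebra.coeff_smul]
  ext x
  rw [Finsupp.filter_apply]
  by_cases hx : p x
  · rw [if_pos hx]
    rw [Finsupp.smul_apply, Finsupp.smul_apply, Finsupp.filter_apply, if_pos hx]
  · rw [if_neg hx, Finsupp.smul_apply, Finsupp.filter_apply, if_neg hx, smul_zero]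

lemma filter_add' (p : FreeMonoid A → Prop) [DecidablePred p] (f g : NC K A) :
    Finsupp.filter p (f + g).coeff = Finsupp.filter p f.coeff + Finsupp.filter p g.coeff := by
  rw [MonoidAlgebra.coeff_add]
  ext x
  rw [Finsupp.filter_apply]
  by_cases hx : p x
  · rw [if_pos hx, Finsupp.add_apply, Finsupp.add_apply, Finsupp.filter_apply, if_pos hx,
      Finsupp.filter_apply, if_pos hx]
  · rw [if_neg hx, Finsupp.add_apply, Finsupp.filter_apply, if_neg hx,
      Finsupp.filter_apply, if_neg hx, add_zero]

lemma filter_eq_self' (p : FreeMonoid A → Prop) [DecidablePred p] (f : NC K A) (h : ∀ x ∈ f.coeff.support, p x) :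
    Finsupp.filter p f.coeff = f.coeff := by
  ext x
  rw [Finsupp.filter_apply]
  by_cases hx : p x
  · rw [if_pos hx]
  · rw [if_neg hx]
    by_contra hne
    exact hx (h x (Finsupp.mem_support_iff.2 fun h0 => hne h0.symm))

lemma filter_eq_zero' (p : FreeMonoid A → Prop) [DecidablePred p] (f : NC K A) (h : ∀ x ∈ f.coeff.support, ¬ p x) :
    Finsupp.filter p f.coeff = 0 := by
  ext x
  rw [Finsupp.filter_apply]
  by_cases hx : p x
  · rw [if_pos hx]
    by_contra hne
    exact h x (Finsupp.mem_support_iff.2 hne) hx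
  · rw [if_neg hx]; rfl

end T

section T2
open Pointwise
variable (K A : Type*) [CommRing K]

lemma lam_support_perm : ∀ (u : List A), ∀ v ∈ (lam K A u).coeff.support, (FreeMonoid.toList v).Perm u
  | [] => by rw [lam_nil]; simp
  | [a] => by
      intro v hv
      rw [lam_single] at hv
      have hv' := Finsupp.support_single_subset hv
      simp only [Finset.mem_singleton] at hv'
      subst hv'
      rfl
  | a :: b :: t => by
      intro v hv
      rw [lam_cons_cons] at hv
      rcases Finset.mem_union.1 (Finsupp.support_sub hv) with h | h
      · obtain ⟨v₁, h₁, v₂, h₂, rfl⟩ := Finset.mem_mul.1 (MonoidAlgebra.support_coeff_mul_subset _ _ h)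
        have hv₂ := Finsupp.support_single_subset h₂
        simp only [Finset.mem_singleton] at hv₂
        subst hv₂
        have hp := lam_support_perm (a :: (b :: t).dropLast) v₁ h₁
        have heq : FreeMonoid.toList (v₁ * FreeMonoid.ofList [(b :: t).getLast (by simp)]) =
            FreeMonoid.toList v₁ ++ [(b :: t).getLast (by simp)] := rfl
        rw [heq]
        refine (hp.append_right [(b :: t).getLast (by simp)]).trans ?_
        rw [List.cons_append, List.dropLast_append_getLast (l := b :: t) (by simp)]
      · obtain ⟨v₁, h₁, v₂, h₂, rfl⟩ := Finset.mem_mul.1 (MonoidAlgebra.support_coeff_mul_subset _ _ h)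
        have hv₂ := Finsupp.support_single_subset h₂
        simp only [Finset.mem_singleton] at hv₂
        subst hv₂
        have hp := lam_support_perm (b :: t) v₁ h₁
        have heq : FreeMonoid.toList (v₁ * FreeMonoid.ofList [a]) =
            FreeMonoid.toList v₁ ++ [a] := rfl
        rw [heq]
        exact (hp.append_right [a]).trans (List.perm_append_singleton a (b :: t))
  termination_by u => u.length
  decreasing_by
    all_goals simp [List.length_dropLast]

lemma sum_count_length [Fintype A] [DecidableEq A] (l : List A) :
    ∑ c : A, l.count c = l.length := by
  induction l with
  | nil => simp
  | cons a l ih => simp [List.count_cons, Finset.sum_add_distrib, ih, add_comm]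

lemma shuffleW_snoc_snoc (a b : A) : ∀ (u v : List A),
    shuffleW K A (u ++ [a]) (v ++ [b]) =
      shuffleW K A (u ++ [a]) v * wp K A [b] + shuffleW K A u (v ++ [b]) * wp K A [a]
  | [], [] => by
      simp only [List.nil_append, shuffleW_cons_cons, shuffleW_nil_left, shuffleW_nil_right]
      all_goals simp only [List.nil_append, shuffleW_nil_left, shuffleW_nil_right, mul_add,
        add_mul, mul_assoc, ← wp_append, List.cons_append, List.append_assoc,
        List.singleton_append]
      all_goals abel
  | (c :: u), [] => by
      simp only [List.cons_append, List.nil_append, shuffleW_cons_cons, shuffleW_nil_left,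
        shuffleW_nil_right]
      rw [show ([b] : List A) = [] ++ [b] from rfl, shuffleW_snoc_snoc a b u []]
      all_goals simp only [List.nil_append, shuffleW_nil_left, shuffleW_nil_right, mul_add,
        add_mul, mul_assoc, ← wp_append, List.cons_append, List.append_assoc,
        List.singleton_append]
      all_goals abel
  | [], (d :: v) => by
      simp only [List.cons_append, List.nil_append, shuffleW_cons_cons, shuffleW_nil_left,
        shuffleW_nil_right]
      rw [show ([a] : List A) = [] ++ [a] from rfl, shuffleW_snoc_snoc a b [] v]
      all_goals simp only [List.nil_append, shuffleW_nil_left, shuffleW_nil_right, mul_add,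
        add_mul, mul_assoc, ← wp_append, List.cons_append, List.append_assoc,
        List.singleton_append]
      all_goals abel
  | (c :: u), (d :: v) => by
      simp only [List.cons_append, shuffleW_cons_cons]
      rw [show (d :: (v ++ [b])) = (d :: v) ++ [b] from rfl, shuffleW_snoc_snoc a b u (d :: v)]
      rw [show (c :: (u ++ [a])) = (c :: u) ++ [a] from rfl, shuffleW_snoc_snoc a b (c :: u) v]
      simp only [List.cons_append, shuffleW_cons_cons]
      noncomm_ring
  termination_by u v => u.length + v.length
  decreasing_by all_goals simp; try omega

end T2

section T3
variable (K A : Type*) [CommRing K]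

lemma drop_dropLast' {α : Type*} (l : List α) (i : ℕ) :
    l.dropLast.drop i = (l.drop i).dropLast := by
  rw [List.dropLast_eq_take, List.dropLast_eq_take, List.drop_take, List.length_drop]
  congr 1
  omega

lemma take_dropLast' {α : Type*} (l : List α) (i : ℕ) (h : i ≤ l.length - 1) :
    l.dropLast.take i = l.take i := by
  rw [List.dropLast_eq_take, List.take_take, min_eq_left h]

lemma take_m_dropLast_drop {α : Type*} (l : List α) (i m : ℕ) (h : i + m ≤ l.length - 1) :
    (l.dropLast.drop i).take m = (l.drop i).take m := by
  rw [drop_dropLast', List.dropLast_eq_take, List.take_take, List.length_drop,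
    min_eq_left (by omega)]

lemma drop_eq_dropLast_append {α : Type*} (l : List α) (i : ℕ) (h : i < l.length)
    (hne : l ≠ []) : l.drop i = (l.drop i).dropLast ++ [l.getLast hne] := by
  have hd : l.drop i ≠ [] := by
    intro h0
    have := congrArg List.length h0
    simp at this
    omega
  conv_lhs => rw [← List.dropLast_append_getLast hd]
  rw [List.getLast_drop]

lemma reassoc_smul (P Q R : NC K A) (c : K) : P * (c • (Q * R)) = (P * (c • Q)) * R := by
  simp only [mul_smul_comm, smul_mul_assoc, mul_assoc]

lemma term_split (a : A) (r : List A) (m i : ℕ) (hm : 1 ≤ m)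
    (him : i + m ≤ (a :: r).length) (hmr : m ≤ r.length) :
    lam K A (((a :: r).drop i).take m) *
        ((-1 : K) ^ i • shuffleW K A ((a :: r).take i).reverse ((a :: r).drop (i + m))) =
      (if i + m < (a :: r).length then
        (lam K A (((a :: r).dropLast.drop i).take m) *
          ((-1 : K) ^ i • shuffleW K A ((a :: r).dropLast.take i).reverse
            ((a :: r).dropLast.drop (i + m)))) * wp K A [(a :: r).getLast (by simp)]
       else 0) +
      (if 0 < i then
        (lam K A ((r.drop (i - 1)).take m) *
          ((-1 : K) ^ i • shuffleW K A (r.take (i - 1)).reverse (r.drop (i - 1 + m)))) *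
            wp K A [a]
       else 0) := by
  have hlen : (a :: r).length = r.length + 1 := by simp
  match i with
  | 0 =>
    rw [if_neg (lt_irrefl 0), add_zero, if_pos (by omega)]
    simp only [List.drop_zero, List.take_zero, List.reverse_nil, pow_zero, one_smul,
      shuffleW_nil_left, Nat.zero_add]
    rw [take_dropLast' _ _ (by omega), drop_dropLast']
    rw [mul_assoc, ← wp_append, ← drop_eq_dropLast_append _ _ (by omega) (by simp)]
  | j + 1 =>
    rw [if_pos (Nat.succ_pos j)]
    simp only [Nat.add_sub_cancel]
    have htake : ((a :: r).take (j + 1)).reverse = (r.take j).reverse ++ [a] := by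
      rw [List.take_succ_cons, List.reverse_cons]
    have hdrop : (a :: r).drop (j + 1 + m) = r.drop (j + m) := by
      rw [show j + 1 + m = (j + m) + 1 by omega, List.drop_succ_cons]
    have hdrop2 : (a :: r).drop (j + 1) = r.drop j := List.drop_succ_cons
    by_cases hcase : j + 1 + m < (a :: r).length
    · rw [if_pos hcase]
      have hx : (a :: r).drop (j + 1 + m) =
          ((a :: r).drop (j + 1 + m)).dropLast ++ [(a :: r).getLast (by simp)] :=
        drop_eq_dropLast_append _ _ (by omega) (by simp)
      rw [htake, hdrop2]
      conv_lhs => rw [hx]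
      rw [shuffleW_snoc_snoc]
      rw [smul_add, mul_add]
      rw [reassoc_smul, reassoc_smul]
      congr 1
      · rw [take_m_dropLast_drop _ _ _ (by omega), take_dropLast' _ _ (by omega),
          drop_dropLast']
        rw [List.take_succ_cons, List.reverse_cons, hdrop2]
      · rw [← hx, hdrop]
    · rw [if_neg hcase, zero_add]
      have hjm : r.drop (j + m) = [] := by
        apply List.drop_eq_nil_of_le
        omega
      rw [htake, hdrop, hdrop2, hjm, shuffleW_nil_right, shuffleW_nil_right, wp_append]
      rw [reassoc_smul]

lemma star_full (w : List A) :
    (∑ i ∈ Finset.range (w.length - w.length + 1),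
        lam K A ((w.drop i).take w.length) *
          ((-1 : K) ^ i • shuffleW K A (w.take i).reverse (w.drop (i + w.length)))) =
      lam K A w := by
  rw [Nat.sub_self, Finset.sum_range_one]
  simp only [List.drop_zero, List.take_length, List.take_zero, List.reverse_nil, Nat.zero_add,
    List.drop_length, shuffleW_nil_left, pow_zero, one_smul]
  rw [wp_nil, mul_one]

lemma star (m : ℕ) (hm : 1 ≤ m) : ∀ (w : List A), m ≤ w.length →
    (∑ i ∈ Finset.range (w.length - m + 1),
        lam K A ((w.drop i).take m) *
          ((-1 : K) ^ i • shuffleW K A (w.take i).reverse (w.drop (i + m)))) = lam K A w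
  | [] => by intro h; simp at h; omega
  | [c] => by
      intro h
      have hm1 : m = 1 := by simp at h; omega
      subst hm1
      simpa using star_full K A [c]
  | a :: b :: t => by
      intro hlen
      rcases eq_or_lt_of_le hlen with heq | hlt
      · rw [heq]
        exact star_full K A (a :: b :: t)
      · have hl3 : (a :: b :: t).length = t.length + 2 := by simp
        have hl2 : (b :: t).length = t.length + 1 := by simp
        have hl1 : ((a :: b :: t).dropLast).length = t.length + 1 := by simp
        have hmr : m ≤ (b :: t).length := by omega
        have IH1 := star m hm ((a :: b :: t).dropLast)
          (by omega)
        have IH2 := star m hm (b :: t) hmr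
        rw [Finset.sum_congr rfl
          (fun i hi => term_split K A a (b :: t) m i hm
            (by simp only [Finset.mem_range] at hi; omega) hmr)]
        rw [Finset.sum_add_distrib]
        have hN1 : ((a :: b :: t).dropLast).length - m + 1 = (a :: b :: t).length - m := by
          omega
        have hN2 : (b :: t).length - m + 1 = (a :: b :: t).length - m := by omega
        -- first sum
        have e1 : (∑ i ∈ Finset.range ((a :: b :: t).length - m + 1),
            if i + m < (a :: b :: t).length then
              (lam K A (((a :: b :: t).dropLast.drop i).take m) *
                ((-1 : K) ^ i • shuffleW K A ((a :: b :: t).dropLast.take i).reverse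
                  ((a :: b :: t).dropLast.drop (i + m)))) * wp K A [(a :: b :: t).getLast (by simp)]
            else 0) = lam K A ((a :: b :: t).dropLast) * wp K A [(a :: b :: t).getLast (by simp)] := by
          rw [Finset.sum_range_succ, if_neg (by omega)]
          rw [add_zero]
          rw [Finset.sum_congr rfl (fun i hi => if_pos (by simp only [Finset.mem_range] at hi; omega))]
          rw [← Finset.sum_mul, ← hN1, IH1]
        -- second sum
        have e2 : (∑ i ∈ Finset.range ((a :: b :: t).length - m + 1),
            if 0 < i then
              (lam K A (((b :: t).drop (i - 1)).take m) *
                ((-1 : K) ^ i • shuffleW K A ((b :: t).take (i - 1)).reverse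
                  ((b :: t).drop (i - 1 + m)))) * wp K A [a]
            else 0) = -(lam K A (b :: t) * wp K A [a]) := by
          rw [show (a :: b :: t).length - m + 1 = ((a :: b :: t).length - m - 1) + 1 + 1 by
            omega]
          rw [Finset.sum_range_succ', if_neg (lt_irrefl 0), add_zero]
          have : ∀ j, (if 0 < j + 1 then
              (lam K A (((b :: t).drop (j + 1 - 1)).take m) *
                ((-1 : K) ^ (j + 1) • shuffleW K A ((b :: t).take (j + 1 - 1)).reverse
                  ((b :: t).drop (j + 1 - 1 + m)))) * wp K A [a]
            else 0) =
              -((lam K A (((b :: t).drop j).take m) *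
                ((-1 : K) ^ j • shuffleW K A ((b :: t).take j).reverse
                  ((b :: t).drop (j + m)))) * wp K A [a]) := by
            intro j
            rw [if_pos (Nat.succ_pos j)]
            simp only [Nat.add_sub_cancel]
            rw [pow_succ, mul_neg_one, neg_smul, mul_neg, neg_mul]
          rw [Finset.sum_congr rfl (fun j _ => this j)]
          rw [Finset.sum_neg_distrib, ← Finset.sum_mul]
          rw [show (a :: b :: t).length - m - 1 + 1 = (b :: t).length - m + 1 by omega]
          rw [IH2]
        rw [e1, e2]
        rw [lam_cons_cons K A a b t, sub_eq_add_neg]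
        rfl
  termination_by w => w.length
  decreasing_by
    all_goals simp [List.length_dropLast]

end T3

section T4
variable (K A : Type*) [CommRing K]

lemma filter_zero' (p : FreeMonoid A → Prop) [DecidablePred p] : Finsupp.filter p (0 : NC K A).coeff = 0 := by
  rw [MonoidAlgebra.coeff_zero]
  ext x
  rw [Finsupp.filter_apply]
  by_cases hx : p x
  · rw [if_pos hx]
  · rw [if_neg hx]; rfl

lemma filter_lam_eq [Fintype A] [DecidableEq A] (m : ℕ) (hm : 1 ≤ m) (k : A → ℕ)
    (v : List A) (hv : m ≤ v.length) :
    Finsupp.filter (fun x : FreeMonoid A => ∀ c : A, ((FreeMonoid.toList x).take m).count c = k c)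
        (lam K A v).coeff =
      (∑ i ∈ Finset.range (v.length - m + 1),
        if ∀ c : A, ((v.drop i).take m).count c = k c then
          lam K A ((v.drop i).take m) *
            ((-1 : K) ^ i • shuffleW K A (v.take i).reverse (v.drop (i + m)))
        else 0).coeff := by
  classical
  set p : FreeMonoid A → Prop :=
    fun x => ∀ c : A, ((FreeMonoid.toList x).take m).count c = k c with hp
  let F : NC K A →+ (FreeMonoid A →₀ K) :=
    { toFun := fun P => Finsupp.filter p P.coeff
      map_zero' := filter_zero' K A p
      map_add' := filter_add' K A p }
  have hF : ∀ P : NC K A, Finsupp.filter p P.coeff = F P := fun _ => rfl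
  conv_lhs => rw [← star K A m hm v hv]
  rw [hF, map_sum, MonoidAlgebra.coeff_sum]
  refine Finset.sum_congr rfl ?_
  intro i hi
  simp only [Finset.mem_range] at hi
  have hulen : ((v.drop i).take m).length = m := by
    simp only [List.length_take, List.length_drop]
    omega
  by_cases hc : ∀ c : A, ((v.drop i).take m).count c = k c
  · rw [if_pos hc]
    rw [← hF]
    apply filter_eq_self'
    intro x hx
    obtain ⟨x₁, h₁, x₂, h₂, rfl⟩ := Finset.mem_mul.1 (MonoidAlgebra.support_coeff_mul_subset _ _ hx)
    have hperm := lam_support_perm K A _ x₁ h₁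
    intro c
    have hxl : FreeMonoid.toList (x₁ * x₂) =
        FreeMonoid.toList x₁ ++ FreeMonoid.toList x₂ := rfl
    rw [hxl, List.take_left' (by rw [hperm.length_eq, hulen]), hperm.count_eq]
    exact hc c
  · rw [if_neg hc]
    rw [← hF]
    rw [MonoidAlgebra.coeff_zero]
    apply filter_eq_zero'
    intro x hx hpx
    apply hc
    intro c
    obtain ⟨x₁, h₁, x₂, h₂, rfl⟩ := Finset.mem_mul.1 (MonoidAlgebra.support_coeff_mul_subset _ _ hx)
    have hperm := lam_support_perm K A _ x₁ h₁
    have hxl : FreeMonoid.toList (x₁ * x₂) =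
        FreeMonoid.toList x₁ ++ FreeMonoid.toList x₂ := rfl
    have := hpx c
    rw [hxl, List.take_left' (by rw [hperm.length_eq, hulen]), hperm.count_eq] at this
    exact this

end T4


theorem lam_eq_sum_over_factors_of_multidegree
    (K A : Type*) [CommRing K] [Fintype A] [DecidableEq A]
    (w w' : List A) (hdeg : ∀ c : A, w.count c = w'.count c)
    (η η' : ℤ) (hηη : η • lam K A w = η' • lam K A w')
    (k : A → ℕ) :
    η • (∑ i ∈ Finset.range (w.length - (∑ c : A, k c) + 1),
        if ∀ c : A, ((w.drop i).take (∑ c : A, k c)).count c = k c then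
          lam K A ((w.drop i).take (∑ c : A, k c)) *
            ((-1 : K) ^ i • shuffleW K A (w.take i).reverse (w.drop (i + (∑ c : A, k c))))
        else 0) =
      η' • (∑ i ∈ Finset.range (w'.length - (∑ c : A, k c) + 1),
        if ∀ c : A, ((w'.drop i).take (∑ c : A, k c)).count c = k c then
          lam K A ((w'.drop i).take (∑ c : A, k c)) *
            ((-1 : K) ^ i • shuffleW K A (w'.take i).reverse (w'.drop (i + (∑ c : A, k c))))
        else 0) := by
  
  classical
  set m : ℕ := ∑ c : A, k c with hm
  have hlen : w.length = w'.length := by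
    rw [← sum_count_length A w, ← sum_count_length A w']
    exact Finset.sum_congr rfl fun c _ => hdeg c
  by_cases hm0 : m = 0
  · simp only [hm0, List.take_zero, lam_nil, zero_mul, ite_self, Finset.sum_const_zero,
      smul_zero]
  · have hm1 : 1 ≤ m := Nat.one_le_iff_ne_zero.2 hm0
    by_cases hmn : m ≤ w.length
    · apply MonoidAlgebra.coeff_injective
      rw [MonoidAlgebra.coeff_smul, MonoidAlgebra.coeff_smul]
      rw [← filter_lam_eq K A m hm1 k w hmn, ← filter_lam_eq K A m hm1 k w' (hlen ▸ hmn)]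
      rw [← filter_smul', ← filter_smul', hηη]
    · -- m > length : both sums vanish
      push_neg at hmn
      have z : ∀ v : List A, v.length < m →
          (∑ i ∈ Finset.range (v.length - m + 1),
            if ∀ c : A, ((v.drop i).take m).count c = k c then
              lam K A ((v.drop i).take m) *
                ((-1 : K) ^ i • shuffleW K A (v.take i).reverse (v.drop (i + m)))
            else 0) = (0 : NC K A) := by
        intro v hv
        rw [show v.length - m = 0 by omega]
        rw [Finset.sum_range_one]
        rw [if_neg]
        intro hcond
        have h1 : ∑ c : A, ((v.drop 0).take m).count c = ∑ c : A, k c :=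
          Finset.sum_congr rfl fun c _ => hcond c
        rw [sum_count_length A] at h1
        simp only [List.drop_zero, List.length_take] at h1
        omega
      rw [z w hmn, z w' (hlen ▸ hmn), smul_zero, smul_zero]
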